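/- A min-plus service recovers its spectral matrix as its spectrum: if S is a spectral matrix for backlog b, then for all i, j ∈ ℕ, λ_{ij}(ψ^S) := sup_{q ∈ U↑b}(ψ^S_j(q) ∸ q_i) = s_{ij}. -/

import Mathlib

/-- A cumulative vector: a nondecreasing sequence `ℕ → ℕ∞` starting at `0`. -/
def Cumulative (x : ℕ → ℕ∞) : Prop := x 0 = 0 ∧ Monotone x

/-- `U↑b`: cumulative vectors whose first entry is at least `b`. -/
def UUp (b : ℕ) : Set (ℕ → ℕ∞) := {x | Cumulative x ∧ (b : ℕ∞) ≤ x 1}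

/-- A spectral matrix for backlog `b`. -/
def SpectralMatrix (b : ℕ) (s : ℕ → ℕ → ℕ∞) : Prop :=
  (∀ i j, j ≤ i → s i j = 0) ∧
  (∀ i j, s i j ≤ s i (j + 1)) ∧
  (∀ i j, s (i + 1) j ≤ s i j) ∧
  (∀ i j, 0 < i → s i j ≤ s 0 j - (b : ℕ∞))

/-- The min-plus service `ψ^S_j(q) = min_i (q_i + s_{ij})`. -/
noncomputable def minPlus (s : ℕ → ℕ → ℕ∞) (q : ℕ → ℕ∞) (j : ℕ) : ℕ∞ :=
  ⨅ i : ℕ, (q i + s i j)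

/-- A min-plus service recovers its spectral matrix as its spectrum:
`λ_{ij}(ψ^S) = sup_{q ∈ U↑b} (ψ^S_j(q) ∸ q_i) = s_{ij}`. -/
theorem minPlus_spectrum (b : ℕ) (s : ℕ → ℕ → ℕ∞)
    (hs : SpectralMatrix b s) (i j : ℕ) :
    (⨆ q ∈ UUp b, (minPlus s q j - q i)) = s i j := by
  obtain ⟨h0, hmono, hanti, hb⟩ := hs
  have hA : Antitone (fun k => s k j) := antitone_nat_of_succ_le (fun n => hanti n j)
  apply le_antisymm
  · refine iSup₂_le fun q hq => ?_
    rw [tsub_le_iff_right]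
    calc minPlus s q j ≤ q i + s i j := iInf_le _ i
      _ = s i j + q i := add_comm _ _
  · -- extremal arrival
    set q : ℕ → ℕ∞ := fun k => if k = 0 then 0 else if k ≤ i then (b : ℕ∞) else ⊤ with hq
    have hq0 : q 0 = 0 := by simp [hq]
    have hqU : q ∈ UUp b := by
      refine ⟨⟨hq0, ?_⟩, ?_⟩
      · intro m n hmn
        simp only [hq]
        split_ifs with h1 h2 h3 h4 h5 h6 <;> simp_all <;> omega
      · simp only [hq]
        split_ifs with h1 h2 <;> simp_all
    refine le_iSup₂_of_le q hqU ?_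
    rcases Nat.eq_zero_or_pos i with hi | hi
    · subst hi
      rw [hq0, tsub_zero]
      refine le_iInf fun k => ?_
      rcases Nat.eq_zero_or_pos k with hk | hk
      · subst hk; simp [hq0]
      · have : q k = ⊤ := by
          rw [hq]; simp only []; rw [if_neg hk.ne', if_neg (by omega)]
        simp [this]
    · have hqi : q i = (b : ℕ∞) := by simp [hq]; omega
      rw [hqi]
      rcases eq_or_ne (s i j) 0 with hz | hz
      · simp [hz]
      · have hble : (b : ℕ∞) ≤ s 0 j := by
          by_contra hlt
          push_neg at hlt
          exact hz (le_antisymm (le_trans (hb i j hi) (by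
            rw [tsub_eq_zero_of_le hlt.le])) bot_le)
        apply (ENat.addLECancellable_of_ne_top (ENat.coe_ne_top b)).le_tsub_of_add_le_right
        refine le_iInf fun k => ?_
        rcases Nat.eq_zero_or_pos k with hk | hk
        · subst hk
          rw [hq0, zero_add]
          exact ((ENat.addLECancellable_of_ne_top (ENat.coe_ne_top b)).le_tsub_iff_right hble).mp (hb i j hi)
        · by_cases hki : k ≤ i
          · have : q k = (b : ℕ∞) := by
              rw [hq]; simp only []; rw [if_neg hk.ne', if_pos hki]
            rw [this, add_comm]
            exact add_le_add le_rfl (hA hki)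
          · have : q k = ⊤ := by
              rw [hq]; simp only []; rw [if_neg hk.ne', if_neg hki]
            simp [this]
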